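/- In the four-state protocol of Algorithm 2, once a configuration with #token ≤ 1 is reached, no agent ever changes its color in any subsequent configuration: every reachable configuration from such a configuration assigns each agent the same color it had. -/
import Mathlib


/-- States of the four-state protocol: r^ω, b^ω, r, b. -/
inductive St : Type
  | rw | bw | r | b
deriving DecidableEq

/-- Deterministic transition function of the protocol. -/
def delta : St → St → St × St
  | .rw, .rw => (.r, .b)
  | .rw, .bw => (.b, .b)
  | .bw, .rw => (.b, .b)
  | .rw, .r  => (.r, .rw)
  | .r,  .rw => (.rw, .r)
  | .bw, .b  => (.b, .bw)
  | .b,  .bw => (.bw, .b)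
  | .rw, .b  => (.r, .bw)
  | .b,  .rw => (.bw, .r)
  | .bw, .r  => (.b, .rw)
  | .r,  .bw => (.rw, .b)
  | p, q     => (p, q)

/-- One step: apply the rule to an ordered pair of distinct agents. -/
def Step {n : ℕ} (C C' : Fin n → St) : Prop :=
  ∃ i j : Fin n, i ≠ j ∧
    C' = Function.update (Function.update C i (delta (C i) (C j)).1) j
          (delta (C i) (C j)).2

/-- Number of agents in state `s`. -/
def cnt {n : ℕ} (C : Fin n → St) (s : St) : ℕ :=
  (Finset.univ.filter fun a => C a = s).card

/-- Number of token-holding agents (state r^ω or b^ω). -/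
def tokens {n : ℕ} (C : Fin n → St) : ℕ := cnt C .rw + cnt C .bw

/-- Number of red agents (state r^ω or r). -/
def reds {n : ℕ} (C : Fin n → St) : ℕ := cnt C .rw + cnt C .r

/-- Number of blue agents (state b^ω or b). -/
def blues {n : ℕ} (C : Fin n → St) : ℕ := cnt C .bw + cnt C .b

/-- Color of a state: `true` = red, `false` = blue. -/
def isRed : St → Bool
  | .rw => true
  | .r  => true
  | .bw => false
  | .b  => false

def isToken : St → Bool
  | .rw => true
  | .bw => true
  | _ => false

def NoTwo {n : ℕ} (C : Fin n → St) : Prop :=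
  ∀ i j : Fin n, i ≠ j → isToken (C i) → isToken (C j) → False

lemma noTwo_of_tokens {n : ℕ} (C : Fin n → St) (h : tokens C ≤ 1) : NoTwo C := by
  intro i j hij hi hj
  have hsub : ({i, j} : Finset (Fin n)) ⊆
      (Finset.univ.filter fun a => C a = St.rw) ∪
      (Finset.univ.filter fun a => C a = St.bw) := by
    intro a ha
    simp only [Finset.mem_insert, Finset.mem_singleton] at ha
    simp only [Finset.mem_union, Finset.mem_filter, Finset.mem_univ, true_and]
    rcases ha with rfl | rfl
    · revert hi; cases h : C a <;> simp [isToken]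
    · revert hj; cases h : C a <;> simp [isToken]
  have hdis : Disjoint (Finset.univ.filter fun a => C a = St.rw)
      (Finset.univ.filter fun a => C a = St.bw) := by
    rw [Finset.disjoint_left]
    intro a h1 h2
    simp only [Finset.mem_filter] at h1 h2
    rw [h1.2] at h2
    exact absurd h2.2 (by simp)
  have hcard := Finset.card_le_card hsub
  rw [Finset.card_union_of_disjoint hdis, Finset.card_pair hij] at hcard
  unfold tokens cnt at h
  omega

lemma delta_key : ∀ p q : St, (isToken p → isToken q → False) →
    isRed (delta p q).1 = isRed p ∧ isRed (delta p q).2 = isRed q ∧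
    isToken (delta p q).1 = isToken q ∧ isToken (delta p q).2 = isToken p := by
  intro p q h
  cases p <;> cases q <;> simp_all [delta, isToken, isRed]

lemma step_key {n : ℕ} {C C' : Fin n → St} (hP : NoTwo C) (h : Step C C') :
    NoTwo C' ∧ ∀ a, isRed (C' a) = isRed (C a) := by
  obtain ⟨i, j, hij, rfl⟩ := h
  have H := delta_key (C i) (C j) (hP i j hij)
  have htok' : ∀ a, isToken
      (Function.update (Function.update C i (delta (C i) (C j)).1) j
        (delta (C i) (C j)).2 a) = isToken (C (Equiv.swap i j a)) := by
    intro a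
    by_cases haj : a = j
    · subst haj
      rw [Function.update_self, Equiv.swap_apply_right]
      exact H.2.2.2
    · rw [Function.update_of_ne haj]
      by_cases hai : a = i
      · subst hai
        rw [Function.update_self, Equiv.swap_apply_left]
        exact H.2.2.1
      · rw [Function.update_of_ne hai, Equiv.swap_apply_of_ne_of_ne hai haj]
  constructor
  · intro a b hab ha hb
    rw [htok'] at ha hb
    exact hP _ _ (fun hE => hab ((Equiv.swap i j).injective hE)) ha hb
  · intro a
    by_cases haj : a = j
    · subst haj
      rw [Function.update_self]
      exact H.2.1
    · rw [Function.update_of_ne haj]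
      by_cases hai : a = i
      · subst hai
        rw [Function.update_self]
        exact H.1
      · rw [Function.update_of_ne hai]

theorem stmt5 (n : ℕ) (C : Fin n → St) (htok : tokens C ≤ 1)
    (C' : Fin n → St) (hreach : Relation.ReflTransGen Step C C') :
    ∀ a : Fin n, isRed (C' a) = isRed (C a) := by
  have key : NoTwo C' ∧ ∀ a, isRed (C' a) = isRed (C a) := by
    induction hreach with
    | refl => exact ⟨noTwo_of_tokens C htok, fun a => rfl⟩
    | tail _ hstep ih =>
      obtain ⟨hN, hcol⟩ := ih
      obtain ⟨hN', hcol'⟩ := step_key hN hstep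
      exact ⟨hN', fun a => (hcol' a).trans (hcol a)⟩
  exact key.2
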